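/- Let S ⊆ ℝ₊ⁿ be compact and convex with 0 ∈ S. For z ∈ (ℂ*)ⁿ and w ∈ ℂⁿ with z+w ∈ (ℂ*)ⁿ, H_S(z+w) ≤ H_S(z) + φ_S(|w₁|/|z₁|, …, |w_n|/|z_n|). -/

import Mathlib

/-- Support function of `S`. -/
noncomputable def suppFn {n : ℕ} (S : Set (Fin n → ℝ)) (ξ : Fin n → ℝ) : ℝ :=
  sSup ((fun s => ∑ j, s j * ξ j) '' S)

/-- Logarithmic supporting function of `S` on `(ℂ*)ⁿ`. -/
noncomputable def HS {n : ℕ} (S : Set (Fin n → ℝ)) (z : Fin n → ℂ) : ℝ :=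
  suppFn S (fun j => Real.log (‖z j‖))

lemma bddAbove_suppFn {n : ℕ} {S : Set (Fin n → ℝ)} (hc : IsCompact S) (ξ : Fin n → ℝ) :
    BddAbove ((fun s => ∑ j, s j * ξ j) '' S) :=
  (hc.image (by continuity)).bddAbove

/-- `H_S(z+w) ≤ H_S(z) + φ_S(|w₁|/|z₁|,…,|w_n|/|z_n|)`. -/
theorem stmt_6 {n : ℕ} (S : Set (Fin n → ℝ)) (hc : IsCompact S) (hconv : Convex ℝ S)
    (h0 : (0 : Fin n → ℝ) ∈ S) (hpos : ∀ s ∈ S, ∀ i, 0 ≤ s i)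
    (z w : Fin n → ℂ) (hz : ∀ j, z j ≠ 0) (hzw : ∀ j, z j + w j ≠ 0) :
    HS S (fun j => z j + w j) ≤
      HS S z + suppFn S (fun j => ‖w j‖ / ‖z j‖) := by
  have key : ∀ j, Real.log (‖z j + w j‖) ≤
      Real.log (‖z j‖) + ‖w j‖ / ‖z j‖ := by
    intro j
    have hzj : (0:ℝ) < ‖z j‖ := by
      exact norm_pos_iff.mpr (hz j)
    have h1 : ‖z j + w j‖ ≤ ‖z j‖ + ‖w j‖ :=
      norm_add_le _ _
    have h2 : Real.log (‖z j + w j‖) ≤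
        Real.log (‖z j‖ + ‖w j‖) := by
      apply Real.log_le_log (norm_pos_iff.mpr (hzw j)) h1
    have h3 : ‖z j‖ + ‖w j‖
        = ‖z j‖ * (1 + ‖w j‖ / ‖z j‖) := by
      field_simp
    have h4 : Real.log (‖z j‖ + ‖w j‖) =
        Real.log (‖z j‖) + Real.log (1 + ‖w j‖ / ‖z j‖) := by
      rw [h3, Real.log_mul hzj.ne' (by positivity)]
    have h5 : Real.log (1 + ‖w j‖ / ‖z j‖) ≤
        ‖w j‖ / ‖z j‖ := by
      have := Real.log_le_sub_one_of_pos (x := 1 + ‖w j‖ / ‖z j‖)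
        (by positivity)
      linarith
    linarith
  unfold HS suppFn
  apply csSup_le (Set.Nonempty.image _ ⟨0, h0⟩)
  rintro x ⟨s, hs, rfl⟩
  have hbound : ∑ j, s j * Real.log (‖z j + w j‖) ≤
      (∑ j, s j * Real.log (‖z j‖))
      + ∑ j, s j * (‖w j‖ / ‖z j‖) := by
    rw [← Finset.sum_add_distrib]
    apply Finset.sum_le_sum
    intro j _
    have := mul_le_mul_of_nonneg_left (key j) (hpos s hs j)
    linarith [this]
  refine hbound.trans (add_le_add ?_ ?_) <;>
    exact le_csSup (bddAbove_suppFn hc _) ⟨s, hs, rfl⟩
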